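/- Let q > 0, w₁, w₂ > 0, and N₁, N₂ ≥ 1. Let L be the (N₁+N₂)×(N₁+N₂) graph Laplacian of the weighted complete graph with vertex set V₁ ⊔ V₂ (|Vᵢ| = Nᵢ), intra-community edge weight w₁ and inter-community edge weight w₂. Then det(qI + L) = q · (q + (N₁+N₂)w₂) · (q + N₁w₁ + N₂w₂)^{N₁-1} · (q + N₂w₁ + N₁w₂)^{N₂-1}. -/

import Mathlib

open Matrix


/-- All-ones matrix. -/
def Jm (m n : ℕ) : Matrix (Fin m) (Fin n) ℝ := Matrix.of fun _ _ => 1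

lemma Jm_mul_Jm (m n p : ℕ) : Jm m n * Jm n p = (n : ℝ) • Jm m p := by
  ext i j
  simp [Jm, Matrix.mul_apply]

lemma smulJ_mul (n : ℕ) (c d c' d' : ℝ) :
    (c • (1 : Matrix (Fin n) (Fin n) ℝ) + d • Jm n n) * (c' • 1 + d' • Jm n n)
      = (c * c') • 1 + (c * d' + d * c' + d * d' * n) • Jm n n := by
  simp only [Matrix.add_mul, Matrix.mul_add, Matrix.smul_mul, Matrix.mul_smul,
    Matrix.one_mul, Matrix.mul_one, Jm_mul_Jm, smul_smul]
  module

lemma J_sandwich (p n m : ℕ) (c d : ℝ) :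
    Jm p n * (c • (1 : Matrix (Fin n) (Fin n) ℝ) + d • Jm n n) * Jm n m
      = (n * (c + d * n)) • Jm p m := by
  rw [Matrix.mul_assoc]
  simp only [Matrix.add_mul, Matrix.smul_mul, Matrix.one_mul, Jm_mul_Jm,
    Matrix.mul_add, Matrix.mul_smul, smul_smul]
  module

lemma det_smulJ (n : ℕ) (hn : 1 ≤ n) (c d : ℝ) (hc : c ≠ 0) :
    (c • (1 : Matrix (Fin n) (Fin n) ℝ) + d • Jm n n).det
      = c ^ (n - 1) * (c + n * d) := by
  have h1 : c • (1 : Matrix (Fin n) (Fin n) ℝ) + d • Jm n n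
      = c • ((1 : Matrix (Fin n) (Fin n) ℝ)
        + replicateCol Unit (fun _ => (1 : ℝ)) * replicateRow Unit (fun _ => d / c)) := by
    ext i j
    by_cases h : i = j <;>
      simp [Jm, Matrix.one_apply, h, Matrix.mul_apply, mul_add] <;> field_simp
  rw [h1, Matrix.det_smul, Matrix.det_one_add_replicateCol_mul_replicateRow]
  obtain ⟨k, rfl⟩ : ∃ k, n = k + 1 := ⟨n - 1, (Nat.succ_pred_eq_of_pos hn).symm⟩
  simp only [dotProduct, Finset.sum_const, Finset.card_univ, Fintype.card_fin,
    nsmul_eq_mul, Nat.add_sub_cancel, pow_succ]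
  push_cast
  field_simp

/-- Determinant of `qI + L` for the Laplacian of the two-community weighted complete
graph with intra-weight `w₁` and inter-weight `w₂`. -/
theorem stmt6 (q w₁ w₂ : ℝ) (N₁ N₂ : ℕ) (hq : 0 < q) (hw₁ : 0 < w₁) (hw₂ : 0 < w₂)
    (hN₁ : 1 ≤ N₁) (hN₂ : 1 ≤ N₂)
    (L : Matrix (Fin N₁ ⊕ Fin N₂) (Fin N₁ ⊕ Fin N₂) ℝ)
    (hL : L = Matrix.of fun x y =>
      match x, y with
      | Sum.inl i, Sum.inl j => if i = j then ((N₁ : ℝ) - 1) * w₁ + (N₂ : ℝ) * w₂ else -w₁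
      | Sum.inr i, Sum.inr j => if i = j then ((N₂ : ℝ) - 1) * w₁ + (N₁ : ℝ) * w₂ else -w₁
      | Sum.inl _, Sum.inr _ => -w₂
      | Sum.inr _, Sum.inl _ => -w₂) :
    (q • (1 : Matrix (Fin N₁ ⊕ Fin N₂) (Fin N₁ ⊕ Fin N₂) ℝ) + L).det
      = q * (q + ((N₁ : ℝ) + (N₂ : ℝ)) * w₂) *
        (q + (N₁ : ℝ) * w₁ + (N₂ : ℝ) * w₂) ^ (N₁ - 1) *
        (q + (N₂ : ℝ) * w₁ + (N₁ : ℝ) * w₂) ^ (N₂ - 1) := by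
  have ha' : (q + (N₁ : ℝ) * w₁ + (N₂ : ℝ) * w₂) ≠ 0 := by positivity
  have hb' : (q + (N₂ : ℝ) * w₁ + (N₁ : ℝ) * w₂) ≠ 0 := by positivity
  have hs' : (q + (N₂ : ℝ) * w₂) ≠ 0 := by positivity
  -- abbreviations
  set a := q + (N₁ : ℝ) * w₁ + (N₂ : ℝ) * w₂ with ha_def
  set b := q + (N₂ : ℝ) * w₁ + (N₁ : ℝ) * w₂ with hb_def
  set e := w₁ / (a * (q + (N₂ : ℝ) * w₂)) with he_def
  set A : Matrix (Fin N₁) (Fin N₁) ℝ := a • 1 + (-w₁) • Jm N₁ N₁ with hA_def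
  set Binv : Matrix (Fin N₁) (Fin N₁) ℝ := a⁻¹ • 1 + e • Jm N₁ N₁ with hBinv_def
  set Bm : Matrix (Fin N₁) (Fin N₂) ℝ := (-w₂) • Jm N₁ N₂ with hBm_def
  set Cm : Matrix (Fin N₂) (Fin N₁) ℝ := (-w₂) • Jm N₂ N₁ with hCm_def
  set D : Matrix (Fin N₂) (Fin N₂) ℝ := b • 1 + (-w₁) • Jm N₂ N₂ with hD_def
  have hcoef : a * e + (-w₁) * a⁻¹ + (-w₁) * e * (N₁ : ℝ) = 0 := by
    rw [he_def, ha_def]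
    field_simp
    ring
  have hAB : A * Binv = 1 := by
    rw [hA_def, hBinv_def, smulJ_mul, mul_inv_cancel₀ ha', hcoef, one_smul, zero_smul, add_zero]
  have hBA : Binv * A = 1 := by
    rw [hA_def, hBinv_def, smulJ_mul, inv_mul_cancel₀ ha']
    have : a⁻¹ * -w₁ + e * a + e * -w₁ * (N₁ : ℝ) = 0 := by
      rw [← hcoef]; ring
    rw [this, one_smul, zero_smul, add_zero]
  haveI : Invertible A := ⟨Binv, hBA, hAB⟩
  have hM : q • (1 : Matrix (Fin N₁ ⊕ Fin N₂) (Fin N₁ ⊕ Fin N₂) ℝ) + L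
      = Matrix.fromBlocks A Bm Cm D := by
    subst hL
    ext i j
    rcases i with i | i <;> rcases j with j | j <;>
      simp [Matrix.fromBlocks, Matrix.one_apply, Jm, hA_def, hBm_def, hCm_def, hD_def,
        ha_def, hb_def] <;>
      split_ifs <;> ring
  have hCB : Cm * Binv * Bm = (w₂ * w₂ * ((N₁ : ℝ) * (a⁻¹ + e * (N₁ : ℝ)))) • Jm N₂ N₂ := by
    rw [hCm_def, hBm_def, hBinv_def]
    rw [Matrix.smul_mul, Matrix.smul_mul, Matrix.mul_smul, J_sandwich, smul_smul, smul_smul]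
    ring_nf
  have hD2 : D - Cm * Binv * Bm
      = b • (1 : Matrix (Fin N₂) (Fin N₂) ℝ)
        + (-w₁ - w₂ * w₂ * ((N₁ : ℝ) * (a⁻¹ + e * (N₁ : ℝ)))) • Jm N₂ N₂ := by
    rw [hCB, hD_def]
    module
  rw [hM, Matrix.det_fromBlocks₁₁, invOf_eq_right_inv hAB, hD2, hA_def,
    det_smulJ N₁ hN₁ a (-w₁) ha', det_smulJ N₂ hN₂ b _ hb']
  have key : (a + (N₁ : ℝ) * (-w₁))
      * (b + (N₂ : ℝ) * (-w₁ - w₂ * w₂ * ((N₁ : ℝ) * (a⁻¹ + e * (N₁ : ℝ)))))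
      = q * (q + ((N₁ : ℝ) + (N₂ : ℝ)) * w₂) := by
    rw [he_def, ha_def, hb_def]
    field_simp
    ring
  linear_combination (a ^ (N₁ - 1) * b ^ (N₂ - 1)) * key
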